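/- If G is the complete directed graph on m ≥ 2 vertices (all edges ij with i ≠ j), then π_ij(G) = m(m−1) for every pair of vertices i ≠ j; that is, every edge weight is influential for every price-ratio function. -/

import Mathlib

open scoped Classical

namespace Money

/-- A finite simple directed graph without loops, on a subset of `Fin n`. -/
structure Digraph (n : ℕ) where
  verts : Finset (Fin n)
  edges : Finset (Fin n × Fin n)
  mem_verts : ∀ e ∈ edges, e.1 ∈ verts ∧ e.2 ∈ verts
  no_loops : ∀ e ∈ edges, e.1 ≠ e.2

namespace Digraph

variable {n : ℕ}

/-- There is a directed path (possibly empty) from `i` to `j`. -/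
def Reaches (G : Digraph n) : Fin n → Fin n → Prop :=
  Relation.ReflTransGen fun a b => (a, b) ∈ G.edges

/-- `G` is connected: nonempty, and any vertex reaches any other by a directed path. -/
def Connected (G : Digraph n) : Prop :=
  G.verts.Nonempty ∧ ∀ i ∈ G.verts, ∀ j ∈ G.verts, G.Reaches i j

/-- `T` is (the edge set of) a spanning `i`-tree of `G`: every vertex `j ≠ i`
has a unique directed path in `T` to `i`. -/
def IsSpanTree (G : Digraph n) (i : Fin n) (T : Finset (Fin n × Fin n)) : Prop :=
  T ⊆ G.edges ∧
  (∀ j ∈ G.verts, j ≠ i → ∃! k, (j, k) ∈ T) ∧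
  (∀ k, (i, k) ∉ T) ∧
  ∀ j ∈ G.verts, Relation.ReflTransGen (fun a b => (a, b) ∈ T) j i

/-- The spanning-tree price of vertex `i` at edge weights `b`. -/
noncomputable def price (G : Digraph n) (i : Fin n) (b : Fin n × Fin n → ℝ) : ℝ :=
  ∑ T ∈ G.edges.powerset.filter (fun T => G.IsSpanTree i T), ∏ e ∈ T, b e

/-- The price-ratio function `b ↦ p_i(b)/p_j(b)`. -/
noncomputable def priceRatio (G : Digraph n) (i j : Fin n) (b : Fin n × Fin n → ℝ) : ℝ :=
  G.price i b / G.price j b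

/-- An edge coordinate `e` is influential for `f` (as a function on positive
weight vectors on the edges of `G`). -/
def Influential (G : Digraph n) (f : (Fin n × Fin n → ℝ) → ℝ) (e : Fin n × Fin n) : Prop :=
  ∃ b b' : Fin n × Fin n → ℝ,
    (∀ e' ∈ G.edges, 0 < b e') ∧ (∀ e' ∈ G.edges, 0 < b' e') ∧
    (∀ e', e' ≠ e → b e' = b' e') ∧ f b ≠ f b'

/-- `π_ij(G)`: the number of influential edges of the price-ratio `p_i/p_j`. -/
noncomputable def priceCplxPair (G : Digraph n) (i j : Fin n) : ℕ :=
  (G.edges.filter (fun e => G.Influential (G.priceRatio i j) e)).card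

/-- The price complexity `π(G) = max_{i ≠ j} π_ij(G)`. -/
noncomputable def priceComplexity (G : Digraph n) : ℕ :=
  ((G.verts ×ˢ G.verts).filter fun p => p.1 ≠ p.2).sup fun p => G.priceCplxPair p.1 p.2

/-- There is a directed walk of length `k` from `i` to `j`. -/
def HasWalk (G : Digraph n) (i j : Fin n) (k : ℕ) : Prop :=
  ∃ g : ℕ → Fin n, g 0 = i ∧ g k = j ∧ ∀ t < k, (g t, g (t + 1)) ∈ G.edges

/-- Length of a shortest directed path from `i` to `j`. -/
noncomputable def dist (G : Digraph n) (i j : Fin n) : ℕ := sInf {k | G.HasWalk i j k}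

/-- The time complexity `τ(G)`: the diameter of `G`. -/
noncomputable def timeComplexity (G : Digraph n) : ℕ :=
  ((G.verts ×ˢ G.verts).filter fun p => p.1 ≠ p.2).sup fun p => G.dist p.1 p.2

def outdeg (G : Digraph n) (v : Fin n) : ℕ := (G.edges.filter fun e => e.1 = v).card

def indeg (G : Digraph n) (v : Fin n) : ℕ := (G.edges.filter fun e => e.2 = v).card

/-- A directed cycle: connected, and every vertex has exactly one outgoing
and one incoming edge. -/
def IsCycleGraph (G : Digraph n) : Prop :=
  G.Connected ∧ ∀ v ∈ G.verts, G.outdeg v = 1 ∧ G.indeg v = 1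

/-- `P` is a (simple) directed path from `s` to `t`, `s ≠ t`. -/
def IsPathGraph (P : Digraph n) (s t : Fin n) : Prop :=
  s ≠ t ∧ s ∈ P.verts ∧ t ∈ P.verts ∧
  (∀ v ∈ P.verts, P.Reaches s v ∧ P.Reaches v t) ∧
  (∀ v ∈ P.verts, v ≠ t → P.outdeg v = 1) ∧ P.outdeg t = 0 ∧
  (∀ v ∈ P.verts, v ≠ s → P.indeg v = 1) ∧ P.indeg s = 0

/-- Union of two digraphs. -/
def union (G H : Digraph n) : Digraph n where
  verts := G.verts ∪ H.verts
  edges := G.edges ∪ H.edges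
  mem_verts := by
    intro e he
    rcases Finset.mem_union.mp he with h | h
    · exact ⟨Finset.mem_union_left _ (G.mem_verts e h).1,
        Finset.mem_union_left _ (G.mem_verts e h).2⟩
    · exact ⟨Finset.mem_union_right _ (H.mem_verts e h).1,
        Finset.mem_union_right _ (H.mem_verts e h).2⟩
  no_loops := by
    intro e he
    rcases Finset.mem_union.mp he with h | h
    · exact G.no_loops e h
    · exact H.no_loops e h

/-- A chorded cycle: a directed cycle `C` together with a directed path `P`
joining two distinct vertices of `C`, otherwise disjoint from `C`. -/
def IsChordedCycle (G : Digraph n) : Prop :=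
  ∃ (C P : Digraph n) (s t : Fin n),
    C.IsCycleGraph ∧ P.IsPathGraph s t ∧ s ∈ C.verts ∧ t ∈ C.verts ∧
    P.verts ∩ C.verts = {s, t} ∧ Disjoint C.edges P.edges ∧ G = C.union P

/-- A `k`-rose: `k` directed cycles sharing a single common vertex, otherwise
pairwise disjoint.  A `0`-rose is a single vertex. -/
def IsRose (G : Digraph n) (k : ℕ) : Prop :=
  ∃ (j : Fin n) (C : Fin k → Digraph n),
    (∀ i, (C i).IsCycleGraph) ∧ (∀ i, j ∈ (C i).verts) ∧
    (∀ i i', i ≠ i' → (C i).verts ∩ (C i').verts = {j}) ∧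
    G.verts = insert j (Finset.univ.biUnion fun i => (C i).verts) ∧
    G.edges = Finset.univ.biUnion fun i => (C i).edges

/-- `H` is a subgraph of `G` (obtained by deleting some edges and vertices). -/
def IsSubgraph (H G : Digraph n) : Prop := H.verts ⊆ G.verts ∧ H.edges ⊆ G.edges

/-- The circuit rank `c(G) = e(G) - v(G) + 1`. -/
def circuitRank (G : Digraph n) : ℤ := (G.edges.card : ℤ) - (G.verts.card : ℤ) + 1

/-- The edge `ij` is collapsible. -/
def Collapsible (G : Digraph n) (i j : Fin n) : Prop :=
  (i, j) ∈ G.edges ∧ G.outdeg i = 1 ∧ (j, i) ∉ G.edges ∧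
  ∀ k, ¬((k, i) ∈ G.edges ∧ (k, j) ∈ G.edges)

/-- `G` is rigid: no collapsible edges. -/
def Rigid (G : Digraph n) : Prop := ∀ i j, ¬G.Collapsible i j

/-- `k` covers the ordinary vertex `i` (whose unique outgoing edge is `ij`). -/
def Covers (G : Digraph n) (k i : Fin n) : Prop :=
  G.outdeg i = 1 ∧ ∃ j, (i, j) ∈ G.edges ∧
    (((k, i) ∈ G.edges ∧ (k, j) ∈ G.edges) ∨ (k = j ∧ (j, i) ∈ G.edges))

/-- A star on all of `Fin n`: a center joined to every other vertex by a pair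
of oppositely directed edges, and no other edges. -/
def IsStar (G : Digraph n) : Prop :=
  ∃ c : Fin n, G.verts = Finset.univ ∧
    G.edges = Finset.univ.filter fun e => (e.1 = c ∧ e.2 ≠ c) ∨ (e.2 = c ∧ e.1 ≠ c)

/-- The complete directed graph on all of `Fin n`. -/
def IsComplete (G : Digraph n) : Prop :=
  G.verts = Finset.univ ∧ G.edges = Finset.univ.filter fun e => e.1 ≠ e.2

/-- A chorded triangle: a 3-cycle `u → v → w → u` together with the
bidirected pair between `u` and `w`. -/
def IsChordedTriangle (T : Digraph n) : Prop :=
  ∃ u v w : Fin n, u ≠ v ∧ v ≠ w ∧ u ≠ w ∧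
    T.verts = {u, v, w} ∧ T.edges = {(u, w), (w, u), (u, v), (v, w)}

end Digraph

end Money

open Money Money.Digraph

section Infra

open Money Money.Digraph

variable {m : ℕ}

/-- The functional tree with root `r` and successor map `σ`. -/
noncomputable def treeOf (r : Fin m) (σ : Fin m → Fin m) : Finset (Fin m × Fin m) :=
  (Finset.univ.erase r).image fun v => (v, σ v)

lemma mem_treeOf {r : Fin m} {σ : Fin m → Fin m} {a b : Fin m} :
    (a, b) ∈ treeOf r σ ↔ a ≠ r ∧ σ a = b := by
  simp only [treeOf, Finset.mem_image, Finset.mem_erase, Finset.mem_univ, and_true,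
    Prod.mk.injEq]
  constructor
  · rintro ⟨v, hv, rfl, rfl⟩; exact ⟨hv, rfl⟩
  · rintro ⟨h, rfl⟩; exact ⟨a, h, rfl, rfl⟩

lemma treeOf_congr {r : Fin m} {σ σ' : Fin m → Fin m}
    (h : ∀ v, v ≠ r → σ v = σ' v) : treeOf r σ = treeOf r σ' := by
  ext ⟨a, b⟩
  simp only [mem_treeOf]
  constructor
  · rintro ⟨ha, rfl⟩; exact ⟨ha, (h a ha).symm⟩
  · rintro ⟨ha, rfl⟩; exact ⟨ha, h a ha⟩

lemma isSpanTree_treeOf (G : Money.Digraph m)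
    (hv : G.verts = Finset.univ)
    (he : G.edges = Finset.univ.filter fun e : Fin m × Fin m => e.1 ≠ e.2)
    (r : Fin m) (σ : Fin m → Fin m)
    (hσ : ∀ v, v ≠ r → σ v ≠ v)
    (hreach : ∀ v, Relation.ReflTransGen (fun a b => a ≠ r ∧ σ a = b) v r) :
    G.IsSpanTree r (treeOf r σ) := by
  refine ⟨?_, ?_, ?_, ?_⟩
  · intro ⟨a, b⟩ hab
    rw [mem_treeOf] at hab
    rw [he, Finset.mem_filter]
    refine ⟨Finset.mem_univ _, ?_⟩
    show a ≠ b
    rintro rfl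
    exact hσ a hab.1 hab.2
  · intro v _ hvr
    refine ⟨σ v, mem_treeOf.2 ⟨hvr, rfl⟩, ?_⟩
    intro y hy
    exact (mem_treeOf.1 hy).2.symm
  · intro k hk
    exact (mem_treeOf.1 hk).1 rfl
  · intro v _
    refine Relation.ReflTransGen.mono ?_ _ _ (hreach v)
    intro a b hab
    exact mem_treeOf.2 hab

/-- Every spanning tree in a graph with all vertices is of the form `treeOf`. -/
lemma spanTree_eq_treeOf (G : Money.Digraph m)
    (hv : G.verts = Finset.univ) {r : Fin m} {T : Finset (Fin m × Fin m)}
    (hT : G.IsSpanTree r T) :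
    ∃ σ : Fin m → Fin m, (∀ v, v ≠ r → (v, σ v) ∈ T) ∧ T = treeOf r σ := by
  obtain ⟨hsub, huniq, hroot, hreach⟩ := hT
  have H : ∀ v : Fin m, v ≠ r → ∃! k, (v, k) ∈ T := fun v hvr =>
    huniq v (by rw [hv]; exact Finset.mem_univ v) hvr
  classical
  refine ⟨fun v => if h : v ≠ r then (H v h).choose else v, ?_, ?_⟩
  · intro v hvr
    simp only [dif_pos hvr]
    exact (H v hvr).choose_spec.1
  · ext ⟨a, b⟩
    rw [mem_treeOf]
    constructor
    · intro hab
      have har : a ≠ r := by rintro rfl; exact hroot b hab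
      refine ⟨har, ?_⟩
      simp only [dif_pos har]
      exact ((H a har).choose_spec.2 b hab).symm
    · rintro ⟨har, rfl⟩
      simp only [dif_pos har]
      exact (H a har).choose_spec.1

/-- Invariant lemma: if `S` is closed under `T`-edges and `j ∉ S`, no vertex of
`S` reaches `j`. -/
lemma not_reaches_of_closed {T : Finset (Fin m × Fin m)} {S : Finset (Fin m)}
    {s j : Fin m} (hs : s ∈ S) (hj : j ∉ S)
    (hcl : ∀ a ∈ S, ∀ b, (a, b) ∈ T → b ∈ S) :
    ¬ Relation.ReflTransGen (fun a b => (a, b) ∈ T) s j := by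
  intro h
  induction h using Relation.ReflTransGen.head_induction_on with
  | refl => exact hj hs
  | head hab _ ih => exact ih (hcl _ hs _ hab)

end Infra
section PriceLemmas

open Money Money.Digraph

variable {m : ℕ}

lemma price_eq_pair (G : Money.Digraph m) (r : Fin m)
    (b : Fin m × Fin m → ℝ) {T1 T2 : Finset (Fin m × Fin m)}
    (h1 : G.IsSpanTree r T1) (h2 : G.IsSpanTree r T2) (h12 : T1 ≠ T2)
    (hcl : ∀ T, G.IsSpanTree r T → (∀ f ∈ T, b f ≠ 0) → T = T1 ∨ T = T2) :
    G.price r b = (∏ f ∈ T1, b f) + (∏ f ∈ T2, b f) := by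
  classical
  have hsub : ({T1, T2} : Finset (Finset (Fin m × Fin m))) ⊆
      G.edges.powerset.filter (fun T => G.IsSpanTree r T) := by
    intro T hT
    rcases Finset.mem_insert.1 hT with rfl | hT
    · exact Finset.mem_filter.2 ⟨Finset.mem_powerset.2 h1.1, h1⟩
    · rw [Finset.mem_singleton] at hT; subst hT
      exact Finset.mem_filter.2 ⟨Finset.mem_powerset.2 h2.1, h2⟩
  have hvanish : ∀ T ∈ G.edges.powerset.filter (fun T => G.IsSpanTree r T),
      T ∉ ({T1, T2} : Finset (Finset (Fin m × Fin m))) → (∏ f ∈ T, b f) = 0 := by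
    intro T hT hT'
    have hst : G.IsSpanTree r T := (Finset.mem_filter.1 hT).2
    simp only [Finset.mem_insert, Finset.mem_singleton, not_or] at hT'
    by_contra hne
    rcases hcl T hst (fun f hf hbf => hne (Finset.prod_eq_zero hf hbf)) with rfl | rfl
    · exact hT'.1 rfl
    · exact hT'.2 rfl
  rw [Money.Digraph.price, ← Finset.sum_subset hsub hvanish, Finset.sum_pair h12]

lemma price_eq_single (G : Money.Digraph m) (r : Fin m)
    (b : Fin m × Fin m → ℝ) {T1 : Finset (Fin m × Fin m)}
    (h1 : G.IsSpanTree r T1)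
    (hcl : ∀ T, G.IsSpanTree r T → (∀ f ∈ T, b f ≠ 0) → T = T1) :
    G.price r b = ∏ f ∈ T1, b f := by
  classical
  have hsub : ({T1} : Finset (Finset (Fin m × Fin m))) ⊆
      G.edges.powerset.filter (fun T => G.IsSpanTree r T) := by
    intro T hT
    rw [Finset.mem_singleton] at hT; subst hT
    exact Finset.mem_filter.2 ⟨Finset.mem_powerset.2 h1.1, h1⟩
  have hvanish : ∀ T ∈ G.edges.powerset.filter (fun T => G.IsSpanTree r T),
      T ∉ ({T1} : Finset (Finset (Fin m × Fin m))) → (∏ f ∈ T, b f) = 0 := by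
    intro T hT hT'
    have hst : G.IsSpanTree r T := (Finset.mem_filter.1 hT).2
    rw [Finset.mem_singleton] at hT'
    by_contra hne
    exact hT' (hcl T hst (fun f hf hbf => hne (Finset.prod_eq_zero hf hbf)))
  rw [Money.Digraph.price, ← Finset.sum_subset hsub hvanish, Finset.sum_singleton]

lemma prod_treeOf (r : Fin m) (σ : Fin m → Fin m) (b : Fin m × Fin m → ℝ) :
    (∏ f ∈ treeOf r σ, b f) = ∏ v ∈ Finset.univ.erase r, b (v, σ v) := by
  rw [treeOf, Finset.prod_image]
  intro x _ y _ hxy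
  exact (Prod.mk.injEq _ _ _ _ ▸ hxy).1

/-- Positivity of prices for positive weights (complete graph). -/
lemma price_pos (G : Money.Digraph m)
    (hv : G.verts = Finset.univ)
    (he : G.edges = Finset.univ.filter fun e : Fin m × Fin m => e.1 ≠ e.2)
    (hm : 2 ≤ m) (r : Fin m) (b : Fin m × Fin m → ℝ)
    (hb : ∀ f ∈ G.edges, 0 < b f) :
    0 < G.price r b := by
  classical
  have hstar : G.IsSpanTree r (treeOf r (fun _ => r)) := by
    refine isSpanTree_treeOf G hv he r _ (fun v hvr => hvr.symm) ?_
    intro v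
    by_cases h : v = r
    · subst h; exact Relation.ReflTransGen.refl
    · exact Relation.ReflTransGen.single ⟨h, rfl⟩
  have hmem : treeOf r (fun _ => r) ∈
      G.edges.powerset.filter (fun T => G.IsSpanTree r T) :=
    Finset.mem_filter.2 ⟨Finset.mem_powerset.2 hstar.1, hstar⟩
  rw [Money.Digraph.price]
  refine Finset.sum_pos' ?_ ⟨_, hmem, ?_⟩
  · intro T hT
    refine Finset.prod_nonneg fun f hf => ?_
    exact le_of_lt (hb f ((Finset.mem_powerset.1 (Finset.mem_filter.1 hT).1) hf))
  · refine Finset.prod_pos fun f hf => hb f (hstar.1 hf)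

end PriceLemmas
section Master

open Money Money.Digraph

variable {m : ℕ}

lemma continuous_price (G : Money.Digraph m) (r : Fin m) :
    Continuous fun b : Fin m × Fin m → ℝ => G.price r b := by
  unfold Money.Digraph.price
  refine continuous_finset_sum _ fun T _ => ?_
  exact continuous_finset_prod _ fun f _ => continuous_apply f

/-- Master influence criterion: if at the limit weight vector `b₀ ≥ 0` the
price ratio differs between edge value `b₀ e` and edge value `2`, then `e` is
influential. -/
lemma influential_of_limit (G : Money.Digraph m)
    (i j : Fin m) (e : Fin m × Fin m) (b₀ : Fin m × Fin m → ℝ)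
    (hnn : ∀ f, 0 ≤ b₀ f)
    (hj0 : G.price j b₀ ≠ 0) (hj2 : G.price j (Function.update b₀ e 2) ≠ 0)
    (hne : G.price i b₀ * G.price j (Function.update b₀ e 2) ≠
      G.price i (Function.update b₀ e 2) * G.price j b₀) :
    G.Influential (G.priceRatio i j) e := by
  classical
  set c : ℝ → (Fin m × Fin m → ℝ) := fun ε f => max (b₀ f) ε with hc
  have hc0 : c 0 = b₀ := by
    funext f; simp [hc, max_eq_left (hnn f)]
  have hcont : Continuous c := by
    rw [continuous_pi_iff]
    intro f
    exact continuous_const.max continuous_id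
  have hcont' : Continuous fun ε => Function.update (c ε) e (2 : ℝ) := by
    rw [continuous_pi_iff]
    intro f
    by_cases hf : f = e
    · subst hf
      simp only [Function.update_self]
      exact continuous_const
    · simp only [Function.update_of_ne hf]
      exact ((continuous_apply f).comp hcont)
  set g : ℝ → ℝ := fun ε =>
    G.price i (c ε) / G.price j (c ε) -
      G.price i (Function.update (c ε) e 2) / G.price j (Function.update (c ε) e 2)
    with hg
  have hgc : ContinuousAt g 0 := by
    apply ContinuousAt.sub
    · apply ContinuousAt.div
      · exact ((continuous_price G i).comp hcont).continuousAt
      · exact ((continuous_price G j).comp hcont).continuousAt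
      · simpa [hc0] using hj0
    · apply ContinuousAt.div
      · exact ((continuous_price G i).comp hcont').continuousAt
      · exact ((continuous_price G j).comp hcont').continuousAt
      · simpa [hc0] using hj2
  have hg0 : g 0 ≠ 0 := by
    simp only [hg, hc0, sub_ne_zero]
    intro h
    exact hne ((div_eq_div_iff hj0 hj2).1 h)
  have hev : ∀ᶠ ε in nhds (0 : ℝ), g ε ≠ 0 := hgc.eventually_ne hg0
  have hev' : ∀ᶠ ε in nhdsWithin (0 : ℝ) (Set.Ioi 0), g ε ≠ 0 ∧ 0 < ε := by
    refine Filter.Eventually.and (nhdsWithin_le_nhds hev) ?_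
    exact eventually_mem_nhdsWithin.mono fun x hx => hx
  obtain ⟨ε, hgε, hε⟩ := hev'.exists
  refine ⟨c ε, Function.update (c ε) e 2, ?_, ?_, ?_, ?_⟩
  · intro f _
    exact lt_of_lt_of_le hε (le_max_right _ _)
  · intro f _
    by_cases hf : f = e
    · subst hf; simp
    · rw [Function.update_of_ne hf]
      exact lt_of_lt_of_le hε (le_max_right _ _)
  · intro f hf
    rw [Function.update_of_ne hf]
  · intro h
    apply hgε
    show _ - _ = (0:ℝ)
    simp only [Money.Digraph.priceRatio] at h
    rw [h, sub_self]

end Master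
section C1

open Money Money.Digraph

variable {m : ℕ}

lemma influential_C1 (G : Money.Digraph m)
    (hv : G.verts = Finset.univ)
    (he : G.edges = Finset.univ.filter fun e : Fin m × Fin m => e.1 ≠ e.2)
    {i j : Fin m} (hij : i ≠ j) :
    G.Influential (G.priceRatio i j) (i, j) := by
  classical
  set e : Fin m × Fin m := (i, j) with hedef
  set bb : ℝ → (Fin m × Fin m → ℝ) := fun t f =>
    if f = e then t else if f.2 = i ∧ f.1 ≠ i then 1 else 0 with hbb
  have hsupp : ∀ (t : ℝ) f, bb t f ≠ 0 → f = e ∨ (f.2 = i ∧ f.1 ≠ i) := by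
    intro t f h
    by_cases h1 : f = e
    · exact Or.inl h1
    by_cases h2 : f.2 = i ∧ f.1 ≠ i
    · exact Or.inr h2
    exact absurd (by simp [hbb, h1, h2]) h
  set σi : Fin m → Fin m := fun _ => i with hσi
  set σj : Fin m → Fin m := fun v => if v = i then j else i with hσj
  have hsti : G.IsSpanTree i (treeOf i σi) := by
    refine isSpanTree_treeOf G hv he i σi (fun v hv' => hv'.symm) fun v => ?_
    by_cases h : v = i
    · subst h; exact Relation.ReflTransGen.refl
    · exact Relation.ReflTransGen.single ⟨h, rfl⟩
  have hstj : G.IsSpanTree j (treeOf j σj) := by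
    refine isSpanTree_treeOf G hv he j σj ?_ ?_
    · intro v hv'
      by_cases h : v = i
      · subst h; simp [hσj, hij.symm]
      · simp [hσj, h, Ne.symm h]
    · intro v
      by_cases h : v = j
      · subst h; exact Relation.ReflTransGen.refl
      by_cases h2 : v = i
      · subst h2; exact Relation.ReflTransGen.single ⟨h, by simp [hσj]⟩
      · refine Relation.ReflTransGen.head ⟨h, by simp [hσj, h2]⟩
          (Relation.ReflTransGen.single ⟨hij, by simp [hσj]⟩)
  -- classification
  have hcli : ∀ (t : ℝ) T, G.IsSpanTree i T → (∀ f ∈ T, bb t f ≠ 0) →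
      T = treeOf i σi := by
    intro t T hT hnz
    obtain ⟨σ, hmem, rfl⟩ := spanTree_eq_treeOf G hv hT
    refine treeOf_congr fun v hvi => ?_
    rcases hsupp t (v, σ v) (hnz _ (hmem v hvi)) with h | h
    · exact absurd (congrArg Prod.fst h) hvi
    · exact h.1
  have hclj : ∀ (t : ℝ) T, G.IsSpanTree j T → (∀ f ∈ T, bb t f ≠ 0) →
      T = treeOf j σj := by
    intro t T hT hnz
    obtain ⟨σ, hmem, rfl⟩ := spanTree_eq_treeOf G hv hT
    refine treeOf_congr fun v hvj => ?_
    rcases hsupp t (v, σ v) (hnz _ (hmem v hvj)) with h | h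
    · have h1 : v = i := congrArg Prod.fst h
      have h2 : σ v = j := congrArg Prod.snd h
      rw [h2, hσj]; simp [h1]
    · have hvi : v ≠ i := h.2
      simp only [hσj, if_neg hvi]
      exact h.1
  -- price values
  have hpi : ∀ t : ℝ, G.price i (bb t) = 1 := by
    intro t
    rw [price_eq_single G i (bb t) hsti (hcli t), prod_treeOf]
    refine Finset.prod_eq_one fun v hvmem => ?_
    have hvi : v ≠ i := (Finset.mem_erase.1 hvmem).1
    have h1 : ((v, i) : Fin m × Fin m) ≠ e := by
      simp only [hedef, Ne, Prod.mk.injEq, not_and]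
      exact fun _ => hij
    simp [hbb, hσi, h1, hvi]
  have hpj : ∀ t : ℝ, G.price j (bb t) = t := by
    intro t
    rw [price_eq_single G j (bb t) hstj (hclj t), prod_treeOf]
    have himem : i ∈ Finset.univ.erase j := Finset.mem_erase.2 ⟨hij, Finset.mem_univ _⟩
    rw [Finset.prod_eq_single_of_mem i himem ?_]
    · simp [hbb, hσj, hedef]
    · intro v _ hvi
      have h1 : ((v, i) : Fin m × Fin m) ≠ e := by
        simp only [hedef, Ne, Prod.mk.injEq, not_and]
        exact fun _ => hij
      simp [hbb, h1, hσj, hvi]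
  -- apply master
  have hupd : Function.update (bb 1) e 2 = bb 2 := by
    funext f
    by_cases hf : f = e
    · subst hf; simp [hbb]
    · rw [Function.update_of_ne hf]
      simp [hbb, hf]
  refine influential_of_limit G i j e (bb 1) ?_ ?_ ?_ ?_
  · intro f
    by_cases h1 : f = e
    · simp [hbb, h1]
    · by_cases h2 : f.2 = i ∧ f.1 ≠ i <;> simp [hbb, h1, h2]
  · rw [hpj]; norm_num
  · rw [hupd, hpj]; norm_num
  · rw [hupd, hpi, hpi, hpj, hpj]; norm_num

end C1
section C2

open Money Money.Digraph

variable {m : ℕ}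

lemma influential_C2 (G : Money.Digraph m)
    (hv : G.verts = Finset.univ)
    (he : G.edges = Finset.univ.filter fun e : Fin m × Fin m => e.1 ≠ e.2)
    {i j l : Fin m} (hij : i ≠ j) (hli : l ≠ i) (hlj : l ≠ j) :
    G.Influential (G.priceRatio i j) (i, l) := by
  classical
  set e : Fin m × Fin m := (i, l) with hedef
  set bb : ℝ → (Fin m × Fin m → ℝ) := fun t f =>
    if f = e then t else if f = (l, j) then 1 else
      if f.2 = i ∧ f.1 ≠ i ∧ f.1 ≠ l then 1 else 0 with hbb
  have hsupp : ∀ (t : ℝ) f, bb t f ≠ 0 →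
      f = e ∨ f = (l, j) ∨ (f.2 = i ∧ f.1 ≠ i ∧ f.1 ≠ l) := by
    intro t f h
    by_cases h1 : f = e
    · exact Or.inl h1
    by_cases h2 : f = (l, j)
    · exact Or.inr (Or.inl h2)
    by_cases h3 : f.2 = i ∧ f.1 ≠ i ∧ f.1 ≠ l
    · exact Or.inr (Or.inr h3)
    exact absurd (by simp [hbb, h1, h2, h3]) h
  set σi : Fin m → Fin m := fun v => if v = l then j else i with hσi
  set σj : Fin m → Fin m := fun v => if v = i then l else if v = l then j else i with hσj
  have hsti : G.IsSpanTree i (treeOf i σi) := by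
    refine isSpanTree_treeOf G hv he i σi ?_ ?_
    · intro v hvi
      by_cases h : v = l
      · subst h; simp [hσi, Ne.symm hlj]
      · simp [hσi, h, Ne.symm hvi]
    · intro v
      by_cases h : v = i
      · subst h; exact Relation.ReflTransGen.refl
      by_cases h2 : v = l
      · subst h2
        refine Relation.ReflTransGen.head ⟨h, by simp [hσi]⟩
          (Relation.ReflTransGen.single ⟨hij.symm, by simp [hσi, hlj.symm]⟩)
      · exact Relation.ReflTransGen.single ⟨h, by simp [hσi, h2]⟩
  have hstj : G.IsSpanTree j (treeOf j σj) := by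
    refine isSpanTree_treeOf G hv he j σj ?_ ?_
    · intro v hvj
      by_cases h : v = i
      · subst h; simp [hσj, hli]
      by_cases h2 : v = l
      · subst h2; simp [hσj, hli, Ne.symm hlj]
      · simp [hσj, h, h2, Ne.symm h]
    · intro v
      by_cases h : v = j
      · subst h; exact Relation.ReflTransGen.refl
      by_cases h2 : v = i
      · subst h2
        refine Relation.ReflTransGen.head ⟨h, by simp [hσj]⟩
          (Relation.ReflTransGen.single ⟨hlj, by simp [hσj, hli]⟩)
      by_cases h3 : v = l
      · subst h3; exact Relation.ReflTransGen.single ⟨h, by simp [hσj, hli]⟩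
      · refine Relation.ReflTransGen.head ⟨h, by simp [hσj, h2, h3]⟩
          (Relation.ReflTransGen.head ⟨hij, by simp [hσj]⟩
            (Relation.ReflTransGen.single ⟨hlj, by simp [hσj, hli]⟩))
  have hcli : ∀ (t : ℝ) T, G.IsSpanTree i T → (∀ f ∈ T, bb t f ≠ 0) →
      T = treeOf i σi := by
    intro t T hT hnz
    obtain ⟨σ, hmem, rfl⟩ := spanTree_eq_treeOf G hv hT
    refine treeOf_congr fun v hvi => ?_
    rcases hsupp t (v, σ v) (hnz _ (hmem v hvi)) with h | h | h
    · exact absurd (congrArg Prod.fst h) hvi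
    · have h1 : v = l := congrArg Prod.fst h
      have h2 : σ v = j := congrArg Prod.snd h
      rw [h2, hσi]; simp [h1]
    · have hvl : v ≠ l := h.2.2
      simp only [hσi, if_neg hvl]
      exact h.1
  have hclj : ∀ (t : ℝ) T, G.IsSpanTree j T → (∀ f ∈ T, bb t f ≠ 0) →
      T = treeOf j σj := by
    intro t T hT hnz
    obtain ⟨σ, hmem, rfl⟩ := spanTree_eq_treeOf G hv hT
    refine treeOf_congr fun v hvj => ?_
    rcases hsupp t (v, σ v) (hnz _ (hmem v hvj)) with h | h | h
    · have h1 : v = i := congrArg Prod.fst h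
      have h2 : σ v = l := congrArg Prod.snd h
      rw [h2, hσj]; simp [h1]
    · have h1 : v = l := congrArg Prod.fst h
      have h2 : σ v = j := congrArg Prod.snd h
      rw [h2, hσj]; simp [h1, hli]
    · have hvi : v ≠ i := h.2.1
      have hvl : v ≠ l := h.2.2
      simp only [hσj, if_neg hvi, if_neg hvl]
      exact h.1
  have hpi : ∀ t : ℝ, G.price i (bb t) = 1 := by
    intro t
    rw [price_eq_single G i (bb t) hsti (hcli t), prod_treeOf]
    refine Finset.prod_eq_one fun v hvmem => ?_
    have hvi : v ≠ i := (Finset.mem_erase.1 hvmem).1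
    by_cases hvl : v = l
    · have h1 : ((l, j) : Fin m × Fin m) ≠ e := by
        simp only [hedef, Ne, Prod.mk.injEq, not_and]
        exact fun hh => absurd hh hli
      simp [hbb, hσi, hvl, h1]
    · have h1 : ((v, i) : Fin m × Fin m) ≠ e := by
        simp only [hedef, Ne, Prod.mk.injEq, not_and]
        exact fun h => absurd h hvi
      have h2 : ((v, i) : Fin m × Fin m) ≠ (l, j) := by
        simp only [Ne, Prod.mk.injEq, not_and]
        exact fun h => absurd h hvl
      simp [hbb, hσi, h1, h2, hvl, hvi]
  have hpj : ∀ t : ℝ, G.price j (bb t) = t := by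
    intro t
    rw [price_eq_single G j (bb t) hstj (hclj t), prod_treeOf]
    have himem : i ∈ Finset.univ.erase j := Finset.mem_erase.2 ⟨hij, Finset.mem_univ _⟩
    rw [Finset.prod_eq_single_of_mem i himem ?_]
    · simp [hbb, hσj, hedef]
    · intro v _ hvi
      by_cases hvl : v = l
      · have h1 : ((l, j) : Fin m × Fin m) ≠ e := by
          simp only [hedef, Ne, Prod.mk.injEq, not_and]
          exact fun hh => absurd hh hli
        simp [hbb, hσj, hvl, hvi, hli, h1]
      · have h1 : ((v, i) : Fin m × Fin m) ≠ e := by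
          simp only [hedef, Ne, Prod.mk.injEq, not_and]
          exact fun h => absurd h hvi
        have h2 : ((v, i) : Fin m × Fin m) ≠ (l, j) := by
          simp only [Ne, Prod.mk.injEq, not_and]
          exact fun h => absurd h hvl
        simp [hbb, hσj, h1, h2, hvl, hvi]
  have hupd : Function.update (bb 1) e 2 = bb 2 := by
    funext f
    by_cases hf : f = e
    · subst hf; simp [hbb]
    · rw [Function.update_of_ne hf]
      simp [hbb, hf]
  refine influential_of_limit G i j e (bb 1) ?_ ?_ ?_ ?_
  · intro f
    by_cases h1 : f = e
    · simp [hbb, h1]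
    by_cases h2 : f = (l, j)
    · simp [hbb, h1, h2]
    · by_cases h3 : f.2 = i ∧ f.1 ≠ i ∧ f.1 ≠ l <;> simp [hbb, h1, h2, h3]
  · rw [hpj]; norm_num
  · rw [hupd, hpj]; norm_num
  · rw [hupd, hpi, hpi, hpj, hpj]; norm_num

end C2
section C5

open Money Money.Digraph

variable {m : ℕ}

lemma influential_C5 (G : Money.Digraph m)
    (hv : G.verts = Finset.univ)
    (he : G.edges = Finset.univ.filter fun e : Fin m × Fin m => e.1 ≠ e.2)
    {i j k : Fin m} (hij : i ≠ j) (hki : k ≠ i) (hkj : k ≠ j) :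
    G.Influential (G.priceRatio i j) (k, i) := by
  classical
  have hij' := hij.symm
  have hki' := hki.symm
  have hkj' := hkj.symm
  set e : Fin m × Fin m := (k, i) with hedef
  set bb : ℝ → (Fin m × Fin m → ℝ) := fun t f =>
    if f = e then t else
    if f = (i, k) ∨ f = (k, j) ∨ f = (j, i) then 1 else
    if f.2 = j ∧ f.1 ≠ i ∧ f.1 ≠ j ∧ f.1 ≠ k then 1 else 0 with hbb
  have hsupp : ∀ (t : ℝ) f, bb t f ≠ 0 →
      f = e ∨ (f = (i, k) ∨ f = (k, j) ∨ f = (j, i)) ∨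
        (f.2 = j ∧ f.1 ≠ i ∧ f.1 ≠ j ∧ f.1 ≠ k) := by
    intro t f h
    by_cases h1 : f = e
    · exact Or.inl h1
    by_cases h2 : f = (i, k) ∨ f = (k, j) ∨ f = (j, i)
    · exact Or.inr (Or.inl h2)
    by_cases h3 : f.2 = j ∧ f.1 ≠ i ∧ f.1 ≠ j ∧ f.1 ≠ k
    · exact Or.inr (Or.inr h3)
    exact absurd (by simp only [hbb, if_neg h1, if_neg h2, if_neg h3]) h
  set σa : Fin m → Fin m := fun v => if v = j then i else if v = k then i else j with hσa
  set σb : Fin m → Fin m := fun v => if v = j then i else j with hσb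
  set σc : Fin m → Fin m := fun v => if v = i then k else j with hσc
  have hsta : G.IsSpanTree i (treeOf i σa) := by
    refine isSpanTree_treeOf G hv he i σa ?_ ?_
    · intro v hvi
      by_cases h : v = j
      · subst h; simp [hσa, hij, hij']
      by_cases h2 : v = k
      · subst h2; simp [hσa, hkj, hki']
      · simp [hσa, h, h2, Ne.symm h]
    · intro v
      by_cases h : v = i
      · subst h; exact Relation.ReflTransGen.refl
      by_cases h2 : v = j
      · subst h2; exact Relation.ReflTransGen.single ⟨h, by simp [hσa]⟩
      by_cases h3 : v = k
      · subst h3; exact Relation.ReflTransGen.single ⟨h, by simp [hσa, hkj]⟩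
      · exact Relation.ReflTransGen.head ⟨h, by simp [hσa, h2, h3]⟩
          (Relation.ReflTransGen.single ⟨hij', by simp [hσa]⟩)
  have hstb : G.IsSpanTree i (treeOf i σb) := by
    refine isSpanTree_treeOf G hv he i σb ?_ ?_
    · intro v hvi
      by_cases h : v = j
      · subst h; simp [hσb, hij, hij']
      · simp [hσb, h, Ne.symm h]
    · intro v
      by_cases h : v = i
      · subst h; exact Relation.ReflTransGen.refl
      by_cases h2 : v = j
      · subst h2; exact Relation.ReflTransGen.single ⟨h, by simp [hσb]⟩
      · exact Relation.ReflTransGen.head ⟨h, by simp [hσb, h2]⟩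
          (Relation.ReflTransGen.single ⟨hij', by simp [hσb]⟩)
  have hstc : G.IsSpanTree j (treeOf j σc) := by
    refine isSpanTree_treeOf G hv he j σc ?_ ?_
    · intro v hvj
      by_cases h : v = i
      · subst h; simp [hσc, hki]
      · simp [hσc, h, Ne.symm hvj]
    · intro v
      by_cases h : v = j
      · subst h; exact Relation.ReflTransGen.refl
      by_cases h2 : v = i
      · subst h2
        refine Relation.ReflTransGen.head ⟨h, by simp [hσc]⟩
          (Relation.ReflTransGen.single ⟨hkj, by simp [hσc, hki]⟩)
      · exact Relation.ReflTransGen.single ⟨h, by simp [hσc, h2]⟩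
  -- classification for root i
  have hcli : ∀ (t : ℝ) T, G.IsSpanTree i T → (∀ f ∈ T, bb t f ≠ 0) →
      T = treeOf i σa ∨ T = treeOf i σb := by
    intro t T hT hnz
    obtain ⟨σ, hmem, rfl⟩ := spanTree_eq_treeOf G hv hT
    have hj : σ j = i := by
      rcases hsupp t (j, σ j) (hnz _ (hmem j hij')) with h | (h | h | h) | h
      · exact absurd (congrArg Prod.fst h) hkj'
      · exact absurd (congrArg Prod.fst h) hij'
      · exact absurd (congrArg Prod.fst h) hkj'
      · exact congrArg Prod.snd h
      · exact absurd rfl h.2.2.1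
    have hoth : ∀ v, v ≠ i → v ≠ j → v ≠ k → σ v = j := by
      intro v hvi hvj hvk
      rcases hsupp t (v, σ v) (hnz _ (hmem v hvi)) with h | (h | h | h) | h
      · exact absurd (congrArg Prod.fst h) hvk
      · exact absurd (congrArg Prod.fst h) hvi
      · exact absurd (congrArg Prod.fst h) hvk
      · exact absurd (congrArg Prod.fst h) hvj
      · exact h.1
    have hk : σ k = i ∨ σ k = j := by
      rcases hsupp t (k, σ k) (hnz _ (hmem k hki)) with h | (h | h | h) | h
      · exact Or.inl (congrArg Prod.snd h)
      · exact absurd (congrArg Prod.fst h) hki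
      · exact Or.inr (congrArg Prod.snd h)
      · exact absurd (congrArg Prod.fst h) hkj
      · exact absurd rfl h.2.2.2
    rcases hk with hk | hk
    · refine Or.inl (treeOf_congr fun v hvi => ?_)
      by_cases h : v = j
      · subst h; simp [hσa, hij', hj]
      by_cases h2 : v = k
      · subst h2; simp [hσa, hkj, hk]
      · simp [hσa, h, h2, hoth v hvi h h2]
    · refine Or.inr (treeOf_congr fun v hvi => ?_)
      by_cases h : v = j
      · subst h; simp [hσb, hj]
      by_cases h2 : v = k
      · subst h2; simp [hσb, hkj, hk]
      · simp [hσb, h, hoth v hvi h h2]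
  -- classification for root j
  have hclj : ∀ (t : ℝ) T, G.IsSpanTree j T → (∀ f ∈ T, bb t f ≠ 0) →
      T = treeOf j σc := by
    intro t T hT hnz
    have hreach := hT.2.2.2
    obtain ⟨σ, hmem, rfl⟩ := spanTree_eq_treeOf G hv hT
    have hi : σ i = k := by
      rcases hsupp t (i, σ i) (hnz _ (hmem i hij)) with h | (h | h | h) | h
      · exact absurd (congrArg Prod.fst h) hki'
      · exact congrArg Prod.snd h
      · exact absurd (congrArg Prod.fst h) hki'
      · exact absurd (congrArg Prod.fst h) hij
      · exact absurd rfl h.2.1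
    have hoth : ∀ v, v ≠ i → v ≠ j → v ≠ k → σ v = j := by
      intro v hvi hvj hvk
      rcases hsupp t (v, σ v) (hnz _ (hmem v hvj)) with h | (h | h | h) | h
      · exact absurd (congrArg Prod.fst h) hvk
      · exact absurd (congrArg Prod.fst h) hvi
      · exact absurd (congrArg Prod.fst h) hvk
      · exact absurd (congrArg Prod.fst h) hvj
      · exact h.1
    have hk : σ k = j := by
      rcases hsupp t (k, σ k) (hnz _ (hmem k hkj)) with h | (h | h | h) | h
      · -- σ k = i : leads to the cycle i ↔ k, contradiction with reachability
        exfalso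
        have hki2 : σ k = i := congrArg Prod.snd h
        refine not_reaches_of_closed (T := treeOf j σ) (S := {i, k}) (s := i) (j := j)
          (by simp) (by simp [hij', hkj']) ?_ ?_
        · intro a ha b hab
          rw [mem_treeOf] at hab
          simp only [Finset.mem_insert, Finset.mem_singleton] at ha ⊢
          rcases ha with rfl | rfl
          · rw [← hab.2, hi]; exact Or.inr rfl
          · rw [← hab.2, hki2]; exact Or.inl rfl
        · exact hreach i (by rw [hv]; exact Finset.mem_univ i)
      · exact absurd (congrArg Prod.fst h) hki
      · exact congrArg Prod.snd h
      · exact absurd (congrArg Prod.fst h) hkj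
      · exact absurd rfl h.2.2.2
    refine treeOf_congr fun v hvj => ?_
    by_cases h : v = i
    · subst h; simp [hσc, hi]
    by_cases h2 : v = k
    · subst h2; simp [hσc, hki, hk]
    · simp [hσc, h, hoth v h hvj h2]
  -- price values
  have hpi : ∀ t : ℝ, G.price i (bb t) = t + 1 := by
    intro t
    have hne12 : treeOf i σa ≠ treeOf i σb := by
      intro hEq
      have h1 : ((k, i) : Fin m × Fin m) ∈ treeOf i σa :=
        mem_treeOf.2 ⟨hki, by simp [hσa, hkj]⟩
      rw [hEq, mem_treeOf] at h1
      exact hij' (by simpa [hσb, hkj] using h1.2)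
    rw [price_eq_pair G i (bb t) hsta hstb hne12 (hcli t), prod_treeOf, prod_treeOf]
    have hkmem : k ∈ Finset.univ.erase i := Finset.mem_erase.2 ⟨hki, Finset.mem_univ _⟩
    have hterm1 : (∏ v ∈ Finset.univ.erase i, bb t (v, σa v)) = t := by
      rw [Finset.prod_eq_single_of_mem k hkmem ?_]
      · simp [hbb, hσa, hkj, hedef]
      · intro v _ hvk
        have hvi : v ≠ i := (Finset.mem_erase.1 ‹v ∈ Finset.univ.erase i›).1
        by_cases h : v = j
        · subst h
          simp [hbb, hσa, hedef, Prod.mk.injEq, hkj', hij', hij, hki']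
        · simp [hbb, hσa, h, hvk, hedef, Prod.mk.injEq, hvi, hij', hkj, Ne.symm h, hvk]
      
    have hterm2 : (∏ v ∈ Finset.univ.erase i, bb t (v, σb v)) = 1 := by
      refine Finset.prod_eq_one fun v hvmem => ?_
      have hvi : v ≠ i := (Finset.mem_erase.1 hvmem).1
      by_cases h : v = j
      · subst h
        simp [hbb, hσb, hedef, Prod.mk.injEq, hkj', hij', hij, hki']
      by_cases h2 : v = k
      · subst h2
        simp [hbb, hσb, h, hedef, Prod.mk.injEq, hij, hij', hki', hkj]
      · simp [hbb, hσb, h, hedef, Prod.mk.injEq, hvi, h2, hij', hkj, Ne.symm h]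
    rw [hterm1, hterm2]
  have hpj : ∀ t : ℝ, G.price j (bb t) = 1 := by
    intro t
    rw [price_eq_single G j (bb t) hstc (hclj t), prod_treeOf]
    refine Finset.prod_eq_one fun v hvmem => ?_
    have hvj : v ≠ j := (Finset.mem_erase.1 hvmem).1
    by_cases h : v = i
    · subst h
      simp [hbb, hσc, hedef, Prod.mk.injEq, hki', hij, hij', hki]
    by_cases h2 : v = k
    · subst h2
      simp [hbb, hσc, hki, hedef, Prod.mk.injEq, hkj, hij, hij']
    · simp [hbb, hσc, h, hedef, Prod.mk.injEq, h2, hvj, hij, hij', hkj, h]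
  have hupd : Function.update (bb 1) e 2 = bb 2 := by
    funext f
    by_cases hf : f = e
    · subst hf; simp [hbb]
    · rw [Function.update_of_ne hf]
      simp [hbb, hf]
  refine influential_of_limit G i j e (bb 1) ?_ ?_ ?_ ?_
  · intro f
    by_cases h1 : f = e
    · simp [hbb, h1]
    by_cases h2 : f = (i, k) ∨ f = (k, j) ∨ f = (j, i)
    · simp [hbb, h1, h2]
    · by_cases h3 : f.2 = j ∧ f.1 ≠ i ∧ f.1 ≠ j ∧ f.1 ≠ k <;> simp [hbb, h1, h2, h3]
  · rw [hpj]; norm_num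
  · rw [hupd, hpj]; norm_num
  · rw [hupd, hpi, hpi, hpj, hpj]; norm_num

end C5
section C7

open Money Money.Digraph

variable {m : ℕ}

lemma influential_C7 (G : Money.Digraph m)
    (hv : G.verts = Finset.univ)
    (he : G.edges = Finset.univ.filter fun e : Fin m × Fin m => e.1 ≠ e.2)
    {i j k l : Fin m} (hij : i ≠ j) (hki : k ≠ i) (hkj : k ≠ j)
    (hli : l ≠ i) (hlj : l ≠ j) (hkl : k ≠ l) :
    G.Influential (G.priceRatio i j) (k, l) := by
  classical
  have hij' := hij.symm
  have hki' := hki.symm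
  have hkj' := hkj.symm
  have hli' := hli.symm
  have hlj' := hlj.symm
  have hkl' := hkl.symm
  set e : Fin m × Fin m := (k, l) with hedef
  set bb : ℝ → (Fin m × Fin m → ℝ) := fun t f =>
    if f = e then t else
    if f = (i, k) ∨ f = (k, j) ∨ f = (j, i) ∨ f = (l, i) then 1 else
    if f.2 = j ∧ f.1 ≠ i ∧ f.1 ≠ j ∧ f.1 ≠ k ∧ f.1 ≠ l then 1 else 0 with hbb
  have hsupp : ∀ (t : ℝ) f, bb t f ≠ 0 →
      f = e ∨ (f = (i, k) ∨ f = (k, j) ∨ f = (j, i) ∨ f = (l, i)) ∨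
        (f.2 = j ∧ f.1 ≠ i ∧ f.1 ≠ j ∧ f.1 ≠ k ∧ f.1 ≠ l) := by
    intro t f h
    by_cases h1 : f = e
    · exact Or.inl h1
    by_cases h2 : f = (i, k) ∨ f = (k, j) ∨ f = (j, i) ∨ f = (l, i)
    · exact Or.inr (Or.inl h2)
    by_cases h3 : f.2 = j ∧ f.1 ≠ i ∧ f.1 ≠ j ∧ f.1 ≠ k ∧ f.1 ≠ l
    · exact Or.inr (Or.inr h3)
    exact absurd (by simp only [hbb, if_neg h1, if_neg h2, if_neg h3]) h
  set σa : Fin m → Fin m := fun v =>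
    if v = j then i else if v = l then i else if v = k then l else j with hσa
  set σb : Fin m → Fin m := fun v =>
    if v = j then i else if v = l then i else j with hσb
  set σc : Fin m → Fin m := fun v =>
    if v = i then k else if v = l then i else j with hσc
  have hsta : G.IsSpanTree i (treeOf i σa) := by
    refine isSpanTree_treeOf G hv he i σa ?_ ?_
    · intro v hvi
      by_cases h : v = j
      · subst h; simp [hσa, hij, hij']
      by_cases h2 : v = l
      · subst h2; simp [hσa, hli, hli', hlj]
      by_cases h3 : v = k
      · subst h3; simp [hσa, hkj, hkl, hkl']
      · simp [hσa, h, h2, h3, Ne.symm h]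
    · intro v
      by_cases h : v = i
      · subst h; exact Relation.ReflTransGen.refl
      by_cases h2 : v = j
      · subst h2; exact Relation.ReflTransGen.single ⟨h, by simp [hσa]⟩
      by_cases h3 : v = l
      · subst h3; exact Relation.ReflTransGen.single ⟨h, by simp [hσa, hlj]⟩
      by_cases h4 : v = k
      · subst h4
        refine Relation.ReflTransGen.head ⟨h, by simp [hσa, hkj, hkl]⟩
          (Relation.ReflTransGen.single ⟨hli, by simp [hσa, hlj]⟩)
      · exact Relation.ReflTransGen.head ⟨h, by simp [hσa, h2, h3, h4]⟩
          (Relation.ReflTransGen.single ⟨hij', by simp [hσa]⟩)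
  have hstb : G.IsSpanTree i (treeOf i σb) := by
    refine isSpanTree_treeOf G hv he i σb ?_ ?_
    · intro v hvi
      by_cases h : v = j
      · subst h; simp [hσb, hij, hij']
      by_cases h2 : v = l
      · subst h2; simp [hσb, hli, hli', hlj]
      · simp [hσb, h, h2, Ne.symm h]
    · intro v
      by_cases h : v = i
      · subst h; exact Relation.ReflTransGen.refl
      by_cases h2 : v = j
      · subst h2; exact Relation.ReflTransGen.single ⟨h, by simp [hσb]⟩
      by_cases h3 : v = l
      · subst h3; exact Relation.ReflTransGen.single ⟨h, by simp [hσb, hlj]⟩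
      · exact Relation.ReflTransGen.head ⟨h, by simp [hσb, h2, h3]⟩
          (Relation.ReflTransGen.single ⟨hij', by simp [hσb]⟩)
  have hstc : G.IsSpanTree j (treeOf j σc) := by
    refine isSpanTree_treeOf G hv he j σc ?_ ?_
    · intro v hvj
      by_cases h : v = i
      · subst h; simp [hσc, hki, hki']
      by_cases h2 : v = l
      · subst h2; simp [hσc, hli, hli']
      · simp [hσc, h, h2, Ne.symm hvj]
    · intro v
      by_cases h : v = j
      · subst h; exact Relation.ReflTransGen.refl
      by_cases h2 : v = i
      · subst h2
        refine Relation.ReflTransGen.head ⟨h, by simp [hσc]⟩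
          (Relation.ReflTransGen.single ⟨hkj, by simp [hσc, hki, hkl]⟩)
      by_cases h3 : v = l
      · subst h3
        refine Relation.ReflTransGen.head ⟨h, by simp [hσc, hli]⟩
          (Relation.ReflTransGen.head ⟨hij, by simp [hσc]⟩
            (Relation.ReflTransGen.single ⟨hkj, by simp [hσc, hki, hkl]⟩))
      · exact Relation.ReflTransGen.single ⟨h, by simp [hσc, h2, h3]⟩
  -- classification for root i
  have hcli : ∀ (t : ℝ) T, G.IsSpanTree i T → (∀ f ∈ T, bb t f ≠ 0) →
      T = treeOf i σa ∨ T = treeOf i σb := by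
    intro t T hT hnz
    obtain ⟨σ, hmem, rfl⟩ := spanTree_eq_treeOf G hv hT
    have hj : σ j = i := by
      rcases hsupp t (j, σ j) (hnz _ (hmem j hij')) with h | (h | h | h | h) | h
      · exact absurd (congrArg Prod.fst h) hkj'
      · exact absurd (congrArg Prod.fst h) hij'
      · exact absurd (congrArg Prod.fst h) hkj'
      · exact congrArg Prod.snd h
      · exact absurd (congrArg Prod.fst h) hlj'
      · exact absurd rfl h.2.2.1
    have hl : σ l = i := by
      rcases hsupp t (l, σ l) (hnz _ (hmem l hli)) with h | (h | h | h | h) | h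
      · exact absurd (congrArg Prod.fst h) hkl'
      · exact absurd (congrArg Prod.fst h) hli
      · exact absurd (congrArg Prod.fst h) hkl'
      · exact absurd (congrArg Prod.fst h) hlj
      · exact congrArg Prod.snd h
      · exact absurd rfl h.2.2.2.2
    have hoth : ∀ v, v ≠ i → v ≠ j → v ≠ k → v ≠ l → σ v = j := by
      intro v hvi hvj hvk hvl
      rcases hsupp t (v, σ v) (hnz _ (hmem v hvi)) with h | (h | h | h | h) | h
      · exact absurd (congrArg Prod.fst h) hvk
      · exact absurd (congrArg Prod.fst h) hvi
      · exact absurd (congrArg Prod.fst h) hvk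
      · exact absurd (congrArg Prod.fst h) hvj
      · exact absurd (congrArg Prod.fst h) hvl
      · exact h.1
    have hk : σ k = l ∨ σ k = j := by
      rcases hsupp t (k, σ k) (hnz _ (hmem k hki)) with h | (h | h | h | h) | h
      · exact Or.inl (congrArg Prod.snd h)
      · exact absurd (congrArg Prod.fst h) hki
      · exact Or.inr (congrArg Prod.snd h)
      · exact absurd (congrArg Prod.fst h) hkj
      · exact absurd (congrArg Prod.fst h) hkl
      · exact absurd rfl h.2.2.2.1
    rcases hk with hk | hk
    · refine Or.inl (treeOf_congr fun v hvi => ?_)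
      by_cases h : v = j
      · subst h; simp [hσa, hj]
      by_cases h2 : v = l
      · subst h2; simp [hσa, hlj, hl]
      by_cases h3 : v = k
      · subst h3; simp [hσa, hkj, hkl, hk]
      · simp [hσa, h, h2, h3, hoth v hvi h h3 h2]
    · refine Or.inr (treeOf_congr fun v hvi => ?_)
      by_cases h : v = j
      · subst h; simp [hσb, hj]
      by_cases h2 : v = l
      · subst h2; simp [hσb, hlj, hl]
      by_cases h3 : v = k
      · subst h3; simp [hσb, hkj, hkl, hk]
      · simp [hσb, h, h2, hoth v hvi h h3 h2]
  -- classification for root j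
  have hclj : ∀ (t : ℝ) T, G.IsSpanTree j T → (∀ f ∈ T, bb t f ≠ 0) →
      T = treeOf j σc := by
    intro t T hT hnz
    have hreach := hT.2.2.2
    obtain ⟨σ, hmem, rfl⟩ := spanTree_eq_treeOf G hv hT
    have hi : σ i = k := by
      rcases hsupp t (i, σ i) (hnz _ (hmem i hij)) with h | (h | h | h | h) | h
      · exact absurd (congrArg Prod.fst h) hki'
      · exact congrArg Prod.snd h
      · exact absurd (congrArg Prod.fst h) hki'
      · exact absurd (congrArg Prod.fst h) hij
      · exact absurd (congrArg Prod.fst h) hli'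
      · exact absurd rfl h.2.1
    have hl : σ l = i := by
      rcases hsupp t (l, σ l) (hnz _ (hmem l hlj)) with h | (h | h | h | h) | h
      · exact absurd (congrArg Prod.fst h) hkl'
      · exact absurd (congrArg Prod.fst h) hli
      · exact absurd (congrArg Prod.fst h) hkl'
      · exact absurd (congrArg Prod.fst h) hlj
      · exact congrArg Prod.snd h
      · exact absurd rfl h.2.2.2.2
    have hoth : ∀ v, v ≠ i → v ≠ j → v ≠ k → v ≠ l → σ v = j := by
      intro v hvi hvj hvk hvl
      rcases hsupp t (v, σ v) (hnz _ (hmem v hvj)) with h | (h | h | h | h) | h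
      · exact absurd (congrArg Prod.fst h) hvk
      · exact absurd (congrArg Prod.fst h) hvi
      · exact absurd (congrArg Prod.fst h) hvk
      · exact absurd (congrArg Prod.fst h) hvj
      · exact absurd (congrArg Prod.fst h) hvl
      · exact h.1
    have hk : σ k = j := by
      rcases hsupp t (k, σ k) (hnz _ (hmem k hkj)) with h | (h | h | h | h) | h
      · -- σ k = l : cycle i → k → l → i, contradiction
        exfalso
        have hkl2 : σ k = l := congrArg Prod.snd h
        refine not_reaches_of_closed (T := treeOf j σ) (S := {i, k, l}) (s := i) (j := j)
          (by simp) (by simp [hij', hkj', hlj']) ?_ ?_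
        · intro a ha b hab
          rw [mem_treeOf] at hab
          simp only [Finset.mem_insert, Finset.mem_singleton] at ha ⊢
          rcases ha with rfl | rfl | rfl
          · rw [← hab.2, hi]; exact Or.inr (Or.inl rfl)
          · rw [← hab.2, hkl2]; exact Or.inr (Or.inr rfl)
          · rw [← hab.2, hl]; exact Or.inl rfl
        · exact hreach i (by rw [hv]; exact Finset.mem_univ i)
      · exact absurd (congrArg Prod.fst h) hki
      · exact congrArg Prod.snd h
      · exact absurd (congrArg Prod.fst h) hkj
      · exact absurd (congrArg Prod.fst h) hkl
      · exact absurd rfl h.2.2.2.1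
    refine treeOf_congr fun v hvj => ?_
    by_cases h : v = i
    · subst h; simp [hσc, hi]
    by_cases h2 : v = l
    · subst h2; simp [hσc, hli, hl]
    by_cases h3 : v = k
    · subst h3; simp [hσc, hki, hkl, hk]
    · simp [hσc, h, h2, hoth v h hvj h3 h2]
  -- price values
  have hpi : ∀ t : ℝ, G.price i (bb t) = t + 1 := by
    intro t
    have hne12 : treeOf i σa ≠ treeOf i σb := by
      intro hEq
      have h1 : ((k, l) : Fin m × Fin m) ∈ treeOf i σa :=
        mem_treeOf.2 ⟨hki, by simp [hσa, hkj, hkl]⟩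
      rw [hEq, mem_treeOf] at h1
      exact hlj' (by simpa [hσb, hkj, hkl] using h1.2)
    rw [price_eq_pair G i (bb t) hsta hstb hne12 (hcli t), prod_treeOf, prod_treeOf]
    have hkmem : k ∈ Finset.univ.erase i := Finset.mem_erase.2 ⟨hki, Finset.mem_univ _⟩
    have hterm1 : (∏ v ∈ Finset.univ.erase i, bb t (v, σa v)) = t := by
      rw [Finset.prod_eq_single_of_mem k hkmem ?_]
      · simp [hbb, hσa, hkj, hkl, hedef]
      · intro v hvmem hvk
        have hvi : v ≠ i := (Finset.mem_erase.1 hvmem).1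
        by_cases h : v = j
        · subst h
          simp [hbb, hσa, hedef, Prod.mk.injEq, hij, hij', hki, hki', hkj, hkj',
            hli, hli', hlj, hlj', hkl, hkl']
        by_cases h2 : v = l
        · subst h2
          simp [hbb, hσa, hedef, Prod.mk.injEq, hij, hij', hki, hki', hkj, hkj',
            hli, hli', hlj, hlj', hkl, hkl']
        · simp [hbb, hσa, h, h2, hvk, hvi, hedef, Prod.mk.injEq, Ne.symm h,
            hij, hij', hki, hki', hkj, hkj', hli, hli', hlj, hlj', hkl, hkl']
    have hterm2 : (∏ v ∈ Finset.univ.erase i, bb t (v, σb v)) = 1 := by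
      refine Finset.prod_eq_one fun v hvmem => ?_
      have hvi : v ≠ i := (Finset.mem_erase.1 hvmem).1
      by_cases h : v = j
      · subst h
        simp [hbb, hσb, hedef, Prod.mk.injEq, hij, hij', hki, hki', hkj, hkj',
          hli, hli', hlj, hlj', hkl, hkl']
      by_cases h2 : v = l
      · subst h2
        simp [hbb, hσb, hedef, Prod.mk.injEq, hij, hij', hki, hki', hkj, hkj',
          hli, hli', hlj, hlj', hkl, hkl']
      by_cases h3 : v = k
      · subst h3
        simp [hbb, hσb, h, h2, hedef, Prod.mk.injEq, hij, hij', hki, hki', hkj, hkj',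
          hli, hli', hlj, hlj', hkl, hkl']
      · simp [hbb, hσb, h, h2, h3, hvi, hedef, Prod.mk.injEq, Ne.symm h,
          hij, hij', hki, hki', hkj, hkj', hli, hli', hlj, hlj', hkl, hkl']
    rw [hterm1, hterm2]
  have hpj : ∀ t : ℝ, G.price j (bb t) = 1 := by
    intro t
    rw [price_eq_single G j (bb t) hstc (hclj t), prod_treeOf]
    refine Finset.prod_eq_one fun v hvmem => ?_
    have hvj : v ≠ j := (Finset.mem_erase.1 hvmem).1
    by_cases h : v = i
    · subst h
      simp [hbb, hσc, hedef, Prod.mk.injEq, hij, hij', hki, hki', hkj, hkj',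
        hli, hli', hlj, hlj', hkl, hkl']
    by_cases h2 : v = l
    · subst h2
      simp [hbb, hσc, hedef, Prod.mk.injEq, hij, hij', hki, hki', hkj, hkj',
        hli, hli', hlj, hlj', hkl, hkl']
    by_cases h3 : v = k
    · subst h3
      simp [hbb, hσc, hedef, Prod.mk.injEq, hij, hij', hki, hki', hkj, hkj',
        hli, hli', hlj, hlj', hkl, hkl']
    · simp [hbb, hσc, h, h2, h3, hvj, hedef, Prod.mk.injEq,
        hij, hij', hki, hki', hkj, hkj', hli, hli', hlj, hlj', hkl, hkl']
  have hupd : Function.update (bb 1) e 2 = bb 2 := by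
    funext f
    by_cases hf : f = e
    · subst hf; simp [hbb]
    · rw [Function.update_of_ne hf]
      simp [hbb, hf]
  refine influential_of_limit G i j e (bb 1) ?_ ?_ ?_ ?_
  · intro f
    by_cases h1 : f = e
    · simp [hbb, h1]
    by_cases h2 : f = (i, k) ∨ f = (k, j) ∨ f = (j, i) ∨ f = (l, i)
    · simp [hbb, h1, h2]
    · by_cases h3 : f.2 = j ∧ f.1 ≠ i ∧ f.1 ≠ j ∧ f.1 ≠ k ∧ f.1 ≠ l <;>
        simp [hbb, h1, h2, h3]
  · rw [hpj]; norm_num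
  · rw [hupd, hpj]; norm_num
  · rw [hupd, hpi, hpi, hpj, hpj]; norm_num

end C7
section Final

open Money Money.Digraph

variable {m : ℕ}

lemma influential_swap (G : Money.Digraph m)
    (hv : G.verts = Finset.univ)
    (he : G.edges = Finset.univ.filter fun e : Fin m × Fin m => e.1 ≠ e.2)
    (hm : 2 ≤ m) {i j : Fin m} (e : Fin m × Fin m) :
    G.Influential (G.priceRatio j i) e → G.Influential (G.priceRatio i j) e := by
  rintro ⟨b, b', hb, hb', hbe, hne⟩
  refine ⟨b, b', hb, hb', hbe, fun h => hne ?_⟩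
  simp only [Money.Digraph.priceRatio] at h ⊢
  rw [div_eq_div_iff (ne_of_gt (price_pos G hv he hm j b hb))
    (ne_of_gt (price_pos G hv he hm j b' hb'))] at h
  rw [div_eq_div_iff (ne_of_gt (price_pos G hv he hm i b hb))
    (ne_of_gt (price_pos G hv he hm i b' hb'))]
  linear_combination -h

lemma card_complete_edges :
    (Finset.univ.filter fun e : Fin m × Fin m => e.1 ≠ e.2).card = m * (m - 1) := by
  have h1 : (Finset.univ.filter fun e : Fin m × Fin m => e.1 ≠ e.2) =
      (Finset.univ : Finset (Fin m)).offDiag := by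
    ext ⟨a, b⟩; simp [Finset.mem_offDiag]
  rw [h1, Finset.offDiag_card, Finset.card_univ, Fintype.card_fin]
  cases m with
  | zero => rfl
  | succ n => simp [Nat.succ_sub_one, Nat.succ_mul, Nat.mul_succ]

theorem stmt19' (hm : 2 ≤ m) (G : Money.Digraph m)
    (hv : G.verts = Finset.univ)
    (he : G.edges = Finset.univ.filter fun e : Fin m × Fin m => e.1 ≠ e.2) :
    ∀ i j : Fin m, i ≠ j →
      G.priceCplxPair i j = m * (m - 1) ∧
      ∀ e ∈ G.edges, G.Influential (G.priceRatio i j) e := by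
  intro i j hij
  have hmain : ∀ e ∈ G.edges, G.Influential (G.priceRatio i j) e := by
    intro e heG
    obtain ⟨k, l⟩ := e
    have hkl : k ≠ l := by
      rw [he] at heG; exact (Finset.mem_filter.1 heG).2
    by_cases hk_i : k = i
    · subst hk_i
      by_cases hl_j : l = j
      · subst hl_j; exact influential_C1 G hv he hij
      · exact influential_C2 G hv he hij (Ne.symm hkl) hl_j
    by_cases hk_j : k = j
    · subst hk_j
      refine influential_swap G hv he hm _ ?_
      by_cases hl_i : l = i
      · subst hl_i; exact influential_C1 G hv he hij.symm
      · exact influential_C2 G hv he hij.symm (Ne.symm hkl) hl_i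
    by_cases hl_i : l = i
    · subst hl_i; exact influential_C5 G hv he hij hk_i hk_j
    by_cases hl_j : l = j
    · subst hl_j
      refine influential_swap G hv he hm _ ?_
      exact influential_C5 G hv he hij.symm hk_j hk_i
    · exact influential_C7 G hv he hij hk_i hk_j hl_i hl_j hkl
  refine ⟨?_, hmain⟩
  rw [Money.Digraph.priceCplxPair, Finset.filter_true_of_mem hmain, he,
    card_complete_edges]

end Final

/-- in the complete directed graph on `m ≥ 2` vertices, every
edge weight is influential for every price ratio, so `π_ij = m(m-1)` for all
`i ≠ j`. -/
theorem stmt19 (m : ℕ) (hm : 2 ≤ m) (G : Money.Digraph m)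
    (hv : G.verts = Finset.univ)
    (he : G.edges = Finset.univ.filter fun e : Fin m × Fin m => e.1 ≠ e.2) :
    ∀ i j : Fin m, i ≠ j →
      G.priceCplxPair i j = m * (m - 1) ∧
      ∀ e ∈ G.edges, G.Influential (G.priceRatio i j) e := by
  exact stmt19' hm G hv he
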